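/- Let (X, 𝓘) be a matroid of rank K and let f : 𝓘 → ℝ be a polymatroid function on 𝓘. Suppose the set 𝓔_f of polymatroid set functions g : 2^X → ℝ that agree with f on 𝓘 is nonempty, and let d = inf{c(g) : g ∈ 𝓔_f}, where c(g) is the total curvature of g. Then every greedy solution G_K and every optimal solution O satisfy (1 + d) · f(G_K) ≥ f(O). If moreover (X, 𝓘) is the uniform matroid of rank K and d > 0, then f(G_K) ≥ (1/d) · (1 − (1 − d/K)^K) · f(O). -/

import Mathlib

open Finset

variable {α : Type*} [DecidableEq α] [Fintype α]

/-- Monotone set function. -/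
def SetMonotone (f : Finset α → ℝ) : Prop :=
  ∀ ⦃A B : Finset α⦄, A ⊆ B → f A ≤ f B

/-- Submodular set function. -/
def SetSubmodular (f : Finset α → ℝ) : Prop :=
  ∀ ⦃A B : Finset α⦄, A ⊆ B → ∀ j ∉ B, f (insert j A) - f A ≥ f (insert j B) - f B

/-- Polymatroid set function: monotone, submodular, and `f ∅ = 0`. -/
def PolymatroidFn (f : Finset α → ℝ) : Prop :=
  SetMonotone f ∧ SetSubmodular f ∧ f ∅ = 0

/-- Hereditary collection of sets. -/
def Hereditary (I : Finset α → Prop) : Prop :=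
  ∀ ⦃B⦄, I B → ∀ ⦃A⦄, A ⊆ B → I A

/-- Independence system: nonempty hereditary collection. -/
def IndepSystem (I : Finset α → Prop) : Prop :=
  (∃ S, I S) ∧ Hereditary I

/-- Augmentation property. -/
def Augmentation (I : Finset α → Prop) : Prop :=
  ∀ ⦃A B⦄, I A → I B → A.card < B.card → ∃ j ∈ B, j ∉ A ∧ I (insert j A)

/-- Matroid: independence system with augmentation. -/
def IsMatroid (I : Finset α → Prop) : Prop :=
  IndepSystem I ∧ Augmentation I

/-- One step of the greedy algorithm: add a feasible element of largest gain. -/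
def GreedyStep (I : Finset α → Prop) (f : Finset α → ℝ) (S S' : Finset α) : Prop :=
  ∃ a ∉ S, I (insert a S) ∧ S' = insert a S ∧
    ∀ b ∉ S, I (insert b S) → f (insert b S) ≤ f (insert a S)

/-- Greedy solution: obtained from `∅` by greedy steps, and no further feasible addition. -/
def IsGreedy (I : Finset α → Prop) (f : Finset α → ℝ) (G : Finset α) : Prop :=
  Relation.ReflTransGen (GreedyStep I f) ∅ G ∧ ∀ a ∉ G, ¬ I (insert a G)

/-- Optimal solution: member of the constraint maximizing `f`. -/
def IsOptimal (I : Finset α → Prop) (f : Finset α → ℝ) (O : Finset α) : Prop :=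
  I O ∧ ∀ S, I S → f S ≤ f O

/-- `B` is a basis of `S`: a maximal independent subset of `S`. -/
def IsBasisOf (I : Finset α → Prop) (S B : Finset α) : Prop :=
  B ⊆ S ∧ I B ∧ ∀ ⦃B' : Finset α⦄, I B' → B ⊆ B' → B' ⊆ S → B' = B

/-- Lower rank of `S`: minimum cardinality of a basis of `S`. -/
noncomputable def lr (I : Finset α → Prop) (S : Finset α) : ℕ :=
  sInf {n : ℕ | ∃ B, IsBasisOf I S B ∧ B.card = n}

/-- Upper rank of `S`: maximum cardinality of a basis of `S`. -/
noncomputable def ur (I : Finset α → Prop) (S : Finset α) : ℕ :=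
  sSup {n : ℕ | ∃ B, IsBasisOf I S B ∧ B.card = n}

/-- Rank quotient `q(X, 𝓘)`. -/
noncomputable def rankQuotient (I : Finset α → Prop) : ℝ :=
  sInf {x : ℝ | ∃ S : Finset α, 0 < ur I S ∧ x = (lr I S : ℝ) / (ur I S : ℝ)}

/-- Total curvature `c(f)`. -/
noncomputable def totalCurvature (f : Finset α → ℝ) : ℝ :=
  sSup {x : ℝ | ∃ j : α, f {j} ≠ f ∅ ∧
    x = 1 - (f Finset.univ - f (Finset.univ.erase j)) / (f {j} - f ∅)}

/-- Partial curvature `b(f)`, over pairs `(j, A)` with `j ∈ A ∈ 𝓘`. -/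
noncomputable def partialCurvature (I : Finset α → Prop) (f : Finset α → ℝ) : ℝ :=
  sSup {x : ℝ | ∃ (j : α) (A : Finset α), I A ∧ j ∈ A ∧ f {j} ≠ f ∅ ∧
    x = 1 - (f A - f (A.erase j)) / (f {j} - f ∅)}

/-- Total `k`-batch curvature `c_k`. -/
noncomputable def batchCurvature (f : Finset α → ℝ) (k : ℕ) : ℝ :=
  sSup {x : ℝ | ∃ J : Finset α, J.card = k ∧ f J ≠ f ∅ ∧
    x = 1 - (f Finset.univ - f (Finset.univ \ J)) / (f J - f ∅)}

/-- Polymatroid function defined on a collection `𝓘`. -/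
def PolymatroidOn (I : Finset α → Prop) (f : Finset α → ℝ) : Prop :=
  f ∅ = 0 ∧ (∀ ⦃A B : Finset α⦄, A ⊆ B → I B → f A ≤ f B) ∧
    ∀ ⦃A B : Finset α⦄, A ⊆ B → ∀ j ∉ B, I (insert j B) →
      f (insert j A) - f A ≥ f (insert j B) - f B

/-- One step of the batched greedy algorithm: add a feasible batch of size `k`
of largest gain. -/
def BatchStep (I : Finset α → Prop) (f : Finset α → ℝ) (k : ℕ) (S S' : Finset α) : Prop :=
  ∃ J : Finset α, Disjoint J S ∧ J.card = k ∧ I (S ∪ J) ∧ S' = S ∪ J ∧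
    ∀ J' : Finset α, Disjoint J' S → J'.card = k → I (S ∪ J') → f (S ∪ J') ≤ f (S ∪ J)

/-- `k`-batch greedy solution: `l - 1` batches of size `k` followed by one batch of
size `m`. -/
def IsBatchGreedy (I : Finset α → Prop) (f : Finset α → ℝ) (k l m : ℕ)
    (S : Finset α) : Prop :=
  ∃ T : ℕ → Finset α, T 0 = ∅ ∧ (∀ t < l - 1, BatchStep I f k (T t) (T (t + 1))) ∧
    BatchStep I f m (T (l - 1)) S

section AuxLemmas
set_option linter.unusedSectionVars false

variable {g : Finset α → ℝ} {c : ℝ}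

lemma aux_nonneg (hg : PolymatroidFn g) (S : Finset α) : 0 ≤ g S := by
  rw [← hg.2.2]; exact hg.1 (Finset.empty_subset S)

lemma aux_marg_le_single (hg : PolymatroidFn g) (A : Finset α) (j : α) :
    g (insert j A) - g A ≤ g {j} := by
  by_cases hj : j ∈ A
  · rw [Finset.insert_eq_self.2 hj]
    simpa using aux_nonneg hg {j}
  · have h := hg.2.1 (Finset.empty_subset A) j hj
    rw [Finset.insert_empty, hg.2.2] at h
    linarith

lemma aux_curv_step (hg : PolymatroidFn g)
    (hc : ∀ j : α, (1 - c) * g {j} ≤ g Finset.univ - g (Finset.univ.erase j))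
    {A : Finset α} {j : α} (hj : j ∉ A) :
    (1 - c) * g {j} ≤ g (insert j A) - g A := by
  refine (hc j).trans ?_
  have hsub : A ⊆ Finset.univ.erase j := Finset.subset_erase.2 ⟨Finset.subset_univ A, hj⟩
  have h := hg.2.1 hsub j (Finset.notMem_erase j _)
  rwa [Finset.insert_erase (Finset.mem_univ j)] at h

lemma aux_expand (hg : PolymatroidFn g) (A B : Finset α) :
    g (A ∪ B) ≤ g A + ∑ b ∈ B \ A, (g (insert b A) - g A) := by
  classical
  induction B using Finset.induction_on with
  | empty => simp
  | @insert b B hb ih =>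
    rw [Finset.union_insert]
    by_cases hbA : b ∈ A
    · rw [Finset.insert_sdiff_of_mem _ hbA,
        Finset.insert_eq_self.2 (Finset.mem_union_left B hbA)]
      exact ih
    · rw [Finset.insert_sdiff_of_notMem _ hbA,
        Finset.sum_insert (by simp [hb])]
      have hbAB : b ∉ A ∪ B := by simp [hbA, hb]
      have hsm := hg.2.1 (Finset.subset_union_left (s₁ := A) (s₂ := B)) b hbAB
      linarith

lemma aux_abel (ρ b : ℕ → ℝ) (hmono : ∀ i, ρ (i + 1) ≤ ρ i) :
    ∀ N, (∀ t ≤ N, 0 ≤ ∑ i ∈ Finset.range t, b i) →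
      (∑ i ∈ Finset.range N, b i) * ρ N ≤ ∑ i ∈ Finset.range N, b i * ρ i := by
  intro N
  induction N with
  | zero => simp
  | succ N ih =>
    intro hpre
    have ih' := ih (fun t ht => hpre t (by omega))
    have h2 := hpre (N + 1) le_rfl
    rw [Finset.sum_range_succ] at h2 ⊢
    rw [Finset.sum_range_succ]
    have h1 : (∑ i ∈ Finset.range N, b i + b N) * ρ (N + 1)
        ≤ (∑ i ∈ Finset.range N, b i + b N) * ρ N :=
      mul_le_mul_of_nonneg_left (hmono N) h2
    nlinarith [ih']

end AuxLemmas
section AuxLemmas2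
set_option linter.unusedSectionVars false

variable {g : Finset α → ℝ} {c : ℝ}

lemma aux_curv_bddAbove (g : Finset α → ℝ) :
    BddAbove {x : ℝ | ∃ j : α, g {j} ≠ g ∅ ∧
      x = 1 - (g Finset.univ - g (Finset.univ.erase j)) / (g {j} - g ∅)} := by
  apply BddAbove.mono (t := Set.range fun j : α =>
    1 - (g Finset.univ - g (Finset.univ.erase j)) / (g {j} - g ∅))
  · rintro x ⟨j, _, rfl⟩; exact ⟨j, rfl⟩
  · exact (Set.finite_range _).bddAbove

lemma aux_curv_nonneg (hg : PolymatroidFn g) : 0 ≤ totalCurvature g := by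
  classical
  rcases Set.eq_empty_or_nonempty {x : ℝ | ∃ j : α, g {j} ≠ g ∅ ∧
      x = 1 - (g Finset.univ - g (Finset.univ.erase j)) / (g {j} - g ∅)} with h | ⟨x, hx⟩
  · unfold totalCurvature; rw [h, Real.sSup_empty]
  · obtain ⟨j, hj, rfl⟩ := hx
    have hgj : 0 < g {j} - g ∅ := by
      have h1 := aux_nonneg hg {j}
      have h2 : g ∅ ≤ g {j} := hg.1 (Finset.empty_subset _)
      rcases lt_or_eq_of_le h2 with h | h
      · linarith
      · exact absurd h.symm hj
    have hQ : g Finset.univ - g (Finset.univ.erase j) ≤ g {j} - g ∅ := by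
      have h := hg.2.1 (Finset.empty_subset (Finset.univ.erase j)) j
        (Finset.notMem_erase j _)
      rw [Finset.insert_erase (Finset.mem_univ j), Finset.insert_empty] at h
      linarith
    have hmem : (1 - (g Finset.univ - g (Finset.univ.erase j)) / (g {j} - g ∅)) ∈
        {x : ℝ | ∃ j : α, g {j} ≠ g ∅ ∧
          x = 1 - (g Finset.univ - g (Finset.univ.erase j)) / (g {j} - g ∅)} := ⟨j, hj, rfl⟩
    have hle := le_csSup (aux_curv_bddAbove g) hmem
    have : (g Finset.univ - g (Finset.univ.erase j)) / (g {j} - g ∅) ≤ 1 :=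
      (div_le_one hgj).2 hQ
    unfold totalCurvature
    linarith

lemma aux_curv_le_one (hg : PolymatroidFn g) : totalCurvature g ≤ 1 := by
  apply Real.sSup_le _ zero_le_one
  rintro x ⟨j, hj, rfl⟩
  have hgj : 0 < g {j} - g ∅ := by
    have h2 : g ∅ ≤ g {j} := hg.1 (Finset.empty_subset _)
    rcases lt_or_eq_of_le h2 with h | h
    · linarith
    · exact absurd h.symm hj
  have hQ : 0 ≤ g Finset.univ - g (Finset.univ.erase j) := by
    have := hg.1 (Finset.erase_subset j (Finset.univ : Finset α))
    linarith
  have := div_nonneg hQ hgj.le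
  linarith

lemma aux_curv_pointwise (hg : PolymatroidFn g) (hcc : totalCurvature g ≤ c) (j : α) :
    (1 - c) * g {j} ≤ g Finset.univ - g (Finset.univ.erase j) := by
  by_cases hj : g {j} = g ∅
  · rw [hj, hg.2.2, mul_zero, sub_nonneg]
    exact hg.1 (Finset.erase_subset j (Finset.univ : Finset α))
  · have hgj : 0 < g {j} - g ∅ := by
      have h2 : g ∅ ≤ g {j} := hg.1 (Finset.empty_subset _)
      rcases lt_or_eq_of_le h2 with h | h
      · linarith
      · exact absurd h.symm hj
    have hmem : (1 - (g Finset.univ - g (Finset.univ.erase j)) / (g {j} - g ∅)) ∈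
        {x : ℝ | ∃ j : α, g {j} ≠ g ∅ ∧
          x = 1 - (g Finset.univ - g (Finset.univ.erase j)) / (g {j} - g ∅)} := ⟨j, hj, rfl⟩
    have hle : 1 - (g Finset.univ - g (Finset.univ.erase j)) / (g {j} - g ∅) ≤ c :=
      (le_csSup (aux_curv_bddAbove g) hmem).trans hcc
    have h2 : 1 - c ≤ (g Finset.univ - g (Finset.univ.erase j)) / (g {j} - g ∅) := by linarith
    have h3 := (le_div_iff₀ hgj).1 h2
    calc (1 - c) * g {j} = (1 - c) * (g {j} - g ∅) := by rw [hg.2.2]; ring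
    _ ≤ g Finset.univ - g (Finset.univ.erase j) := h3

end AuxLemmas2
section AuxLemmas3
set_option linter.unusedSectionVars false

variable {I : Finset α → Prop} {f g : Finset α → ℝ} {c : ℝ}
variable {T : ℕ → Finset α} {a : ℕ → α} {n : ℕ}

lemma aux_chain [Nonempty α] {G : Finset α}
    (h : Relation.ReflTransGen (GreedyStep I f) ∅ G) :
    ∃ (n : ℕ) (T : ℕ → Finset α) (a : ℕ → α), T 0 = ∅ ∧ T n = G ∧
      ∀ i < n, a i ∉ T i ∧ T (i + 1) = insert (a i) (T i) ∧ I (insert (a i) (T i)) ∧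
        ∀ b ∉ T i, I (insert b (T i)) → f (insert b (T i)) ≤ f (insert (a i) (T i)) := by
  induction h with
  | refl =>
    exact ⟨0, fun _ => ∅, fun _ => Classical.arbitrary α, rfl, rfl, by omega⟩
  | @tail S S' hS hstep ih =>
    obtain ⟨n, T, a, hT0, hTn, hprev⟩ := ih
    obtain ⟨x, hx, hxI, hSeq, hxmax⟩ := hstep
    refine ⟨n + 1, fun i => if i = n + 1 then S' else T i,
      fun i => if i = n then x else a i, ?_, ?_, ?_⟩
    · dsimp only; rw [if_neg (by omega)]; exact hT0
    · dsimp only; rw [if_pos rfl]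
    · intro i hi
      dsimp only
      by_cases hin : i = n
      · subst hin
        rw [if_pos rfl, if_pos rfl, if_neg (by omega), hTn]
        exact ⟨hx, hSeq, hSeq ▸ hxI, fun b hb hbI => hxmax b hb hbI⟩
      · have hi' : i < n := by omega
        rw [if_neg hin, if_neg (by omega), if_neg (by omega)]
        exact hprev i hi'

lemma aux_T_subset' (hins : ∀ i < n, a i ∉ T i ∧ T (i + 1) = insert (a i) (T i)) :
    ∀ k i, i + k ≤ n → T i ⊆ T (i + k) := by
  intro k
  induction k with
  | zero => intro i _; exact subset_rfl
  | succ k ih =>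
    intro i hi
    refine (ih i (by omega)).trans ?_
    show T (i + k) ⊆ T ((i + k) + 1)
    rw [(hins (i + k) (by omega)).2]
    exact Finset.subset_insert _ _

lemma aux_T_subset (hins : ∀ i < n, a i ∉ T i ∧ T (i + 1) = insert (a i) (T i))
    {i j : ℕ} (hij : i ≤ j) (hjn : j ≤ n) : T i ⊆ T j := by
  obtain ⟨k, rfl⟩ : ∃ k, j = i + k := ⟨j - i, by omega⟩
  exact aux_T_subset' hins k i (by omega)

lemma aux_T_card (hT0 : T 0 = ∅)
    (hins : ∀ i < n, a i ∉ T i ∧ T (i + 1) = insert (a i) (T i)) :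
    ∀ i ≤ n, (T i).card = i := by
  intro i
  induction i with
  | zero => intro _; simp [hT0]
  | succ i ih =>
    intro hi
    obtain ⟨ha, hT⟩ := hins i (by omega)
    rw [hT, Finset.card_insert_of_notMem ha, ih (by omega)]

lemma aux_L2 (hg : PolymatroidFn g) (hc1 : c ≤ 1)
    (hc : ∀ j : α, (1 - c) * g {j} ≤ g Finset.univ - g (Finset.univ.erase j))
    (hT0 : T 0 = ∅)
    (hins : ∀ i < n, a i ∉ T i ∧ T (i + 1) = insert (a i) (T i))
    (W : Finset α) :
    ∀ t ≤ n, g W + (1 - c) * ∑ i ∈ (Finset.range t).filter (fun i => a i ∉ W),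
      (g (T (i + 1)) - g (T i)) ≤ g (W ∪ T t) := by
  classical
  intro t
  induction t with
  | zero => intro _; simp [hT0]
  | succ t ih =>
    intro ht
    have ht' : t < n := by omega
    obtain ⟨ha, hTi⟩ := hins t ht'
    have IH := ih (by omega)
    have hunion : W ∪ T (t + 1) = insert (a t) (W ∪ T t) := by
      rw [hTi, Finset.union_insert]
    rw [hunion, Finset.range_add_one, Finset.filter_insert]
    by_cases hw : a t ∈ W
    · rw [if_neg (by simp [hw])]
      rw [Finset.insert_eq_self.2 (Finset.mem_union_left _ hw)]
      exact IH
    · rw [if_pos hw, Finset.sum_insert (by simp)]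
      have hmem : a t ∉ W ∪ T t := by simp [hw, ha]
      have hstep := aux_curv_step hg hc hmem
      have hρ : g (T (t + 1)) - g (T t) ≤ g {a t} := by
        rw [hTi]; exact aux_marg_le_single hg _ _
      have h1c : (0:ℝ) ≤ 1 - c := by linarith
      have := mul_le_mul_of_nonneg_left hρ h1c
      rw [mul_add]
      linarith

lemma aux_Lcard (hT0 : T 0 = ∅)
    (hins : ∀ i < n, a i ∉ T i ∧ T (i + 1) = insert (a i) (T i))
    (W : Finset α) :
    ∀ t ≤ n, (W ∩ T t).card = ((Finset.range t).filter (fun i => a i ∈ W)).card := by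
  classical
  intro t
  induction t with
  | zero => intro _; simp [hT0]
  | succ t ih =>
    intro ht
    have ht' : t < n := by omega
    obtain ⟨ha, hTi⟩ := hins t ht'
    rw [Finset.range_add_one, Finset.filter_insert]
    by_cases hw : a t ∈ W
    · rw [if_pos hw]
      have hint : W ∩ T (t + 1) = insert (a t) (W ∩ T t) := by
        rw [hTi]; exact Finset.inter_insert_of_mem hw
      rw [hint, Finset.card_insert_of_notMem (fun hmem => ha (Finset.mem_inter.1 hmem).2),
        Finset.card_insert_of_notMem (by simp), ih (by omega)]
    · rw [if_neg (by simp [hw])]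
      have hint : W ∩ T (t + 1) = W ∩ T t := by
        rw [hTi]; exact Finset.inter_insert_of_notMem hw
      rw [hint]; exact ih (by omega)

end AuxLemmas3
noncomputable def auxh (c : ℝ) (s r : ℕ) : ℝ :=
  if r = 0 then 0 else (1 - (1 - c / r) ^ s) / c

section AuxLemmas4
set_option linter.unusedSectionVars false

variable {c : ℝ}

lemma aux_base_mem (hc0 : 0 < c) (hc1 : c ≤ 1) {r : ℕ} (hr : 0 < r) :
    0 ≤ 1 - c / (r:ℝ) ∧ 1 - c / (r:ℝ) ≤ 1 := by
  have hr1 : (1:ℝ) ≤ r := by exact_mod_cast hr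
  have h1 : c / (r:ℝ) ≤ 1 := by
    rw [div_le_one (by linarith)]; linarith
  have h2 : 0 ≤ c / (r:ℝ) := div_nonneg hc0.le (by linarith)
  constructor <;> linarith

lemma auxh_nonneg (hc0 : 0 < c) (hc1 : c ≤ 1) (s r : ℕ) : 0 ≤ auxh c s r := by
  unfold auxh
  split
  · exact le_rfl
  · next hr =>
    obtain ⟨hb0, hb1⟩ := aux_base_mem hc0 hc1 (Nat.pos_of_ne_zero hr)
    have := pow_le_one₀ hb0 hb1 (n := s)
    exact div_nonneg (by linarith) hc0.le

lemma auxh_le_inv (hc0 : 0 < c) (hc1 : c ≤ 1) (s r : ℕ) : c * auxh c s r ≤ 1 := by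
  unfold auxh
  split
  · simp
  · next hr =>
    obtain ⟨hb0, hb1⟩ := aux_base_mem hc0 hc1 (Nat.pos_of_ne_zero hr)
    have hp : 0 ≤ (1 - c / (r:ℝ)) ^ s := pow_nonneg hb0 s
    rw [mul_div_cancel₀ _ (ne_of_gt hc0)]
    linarith

lemma aux_bernoulli (hc0 : 0 < c) {s : ℕ} {R : ℝ} (hR : 1 ≤ R) (hcR : c ≤ R)
    (hsR : (s:ℝ) ≤ R) : 1 - c ≤ (1 - c / R) ^ s := by
  have hR0 : (0:ℝ) < R := by linarith
  have h1 : -(2:ℝ) ≤ -(c / R) := by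
    have : c / R ≤ 1 := by rw [div_le_one hR0]; linarith
    linarith
  have hb := one_add_mul_le_pow h1 s
  have heq : 1 + (s:ℝ) * -(c / R) = 1 - (s:ℝ) * (c / R) := by ring
  rw [heq] at hb
  have h3 : (s:ℝ) * (c / R) ≤ R * (c / R) :=
    mul_le_mul_of_nonneg_right hsR (div_nonneg hc0.le hR0.le)
  have h4 : R * (c / R) = c := by field_simp
  have heq2 : (1 + -(c / R)) = 1 - c / R := by ring
  rw [heq2] at hb
  linarith

lemma auxh_le_one (hc0 : 0 < c) (hc1 : c ≤ 1) {s r : ℕ} (hsr : s ≤ r) :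
    auxh c s r ≤ 1 := by
  unfold auxh
  split
  · linarith
  · next hr =>
    have hrpos := Nat.pos_of_ne_zero hr
    have hR1 : (1:ℝ) ≤ r := by exact_mod_cast hrpos
    have hb := aux_bernoulli hc0 hR1 (by linarith) (by exact_mod_cast hsr)
    rw [div_le_one hc0]
    linarith

lemma aux_INEQ2 (hc0 : 0 < c) {s r : ℕ} (hr : 0 < r) :
    auxh c (s + 1) r = 1 / (r:ℝ) + (1 - c / (r:ℝ)) * auxh c s r := by
  unfold auxh
  rw [if_neg (by omega), if_neg (by omega)]
  have hR0 : ((r:ℕ):ℝ) ≠ 0 := by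
    simp only [ne_eq, Nat.cast_eq_zero]; omega
  rw [pow_succ]
  field_simp
  ring

end AuxLemmas4
section AuxLemmas5
set_option linter.unusedSectionVars false

variable {c : ℝ}

lemma aux_calc (hc0 : 0 < c) (hc1 : c ≤ 1) {r : ℕ} (h2 : 2 ≤ r) :
    ∀ s : ℕ, s ≤ r - 1 →
      (1 - c) / (r:ℝ) ≤ (1 - c / (r:ℝ)) ^ (s + 1)
        - (((r:ℝ) - 1) / (r:ℝ)) * (1 - c / ((r:ℝ) - 1)) ^ s := by
  have hR2 : (2:ℝ) ≤ (r:ℝ) := by exact_mod_cast h2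
  have hR0 : ((r:ℝ)) ≠ 0 := by linarith
  have hR10 : ((r:ℝ) - 1) ≠ 0 := by linarith
  intro s
  induction s with
  | zero =>
    intro _
    apply le_of_eq
    field_simp
    rw [zero_add, pow_one, mul_div_cancel₀ _ hR0]; ring
  | succ s ihs =>
    intro hs
    have IH := ihs (by omega)
    set X := 1 - c / (r:ℝ) with hX
    set Y := 1 - c / ((r:ℝ) - 1) with hY
    have hXnn : 0 ≤ X := by
      rw [hX]
      have : c / (r:ℝ) ≤ 1 := by rw [div_le_one (by linarith)]; linarith
      linarith
    have hYs : 1 - c ≤ Y ^ s := by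
      rw [hY]
      have hsr : (s:ℝ) + 2 ≤ (r:ℝ) := by exact_mod_cast (by omega : s + 2 ≤ r)
      exact aux_bernoulli hc0 (by linarith) (by linarith) (by linarith)
    have hid : X ^ (s + 1 + 1) - (((r:ℝ) - 1) / (r:ℝ)) * Y ^ (s + 1)
        = X * (X ^ (s + 1) - (((r:ℝ) - 1) / (r:ℝ)) * Y ^ s)
          + (((r:ℝ) - 1) / (r:ℝ)) * (X - Y) * Y ^ s := by ring
    have hXY : (((r:ℝ) - 1) / (r:ℝ)) * (X - Y) = c / (r:ℝ) ^ 2 := by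
      rw [hX, hY]
      field_simp
      ring
    have hkey : X * ((1 - c) / (r:ℝ)) + (c / (r:ℝ) ^ 2) * (1 - c) = (1 - c) / (r:ℝ) := by
      rw [hX]
      field_simp
      ring
    have h5 : X * ((1 - c) / (r:ℝ)) ≤ X * (X ^ (s + 1) - (((r:ℝ) - 1) / (r:ℝ)) * Y ^ s) :=
      mul_le_mul_of_nonneg_left IH hXnn
    have h6 : (c / (r:ℝ) ^ 2) * (1 - c) ≤ (c / (r:ℝ) ^ 2) * Y ^ s :=
      mul_le_mul_of_nonneg_left hYs (by positivity)
    rw [hid, hXY]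
    linarith

lemma aux_INEQ1 (hc0 : 0 < c) (hc1 : c ≤ 1) {s r : ℕ} (hr : 0 < r) (hsr : s + 1 ≤ r) :
    auxh c (s + 1) r ≤ 1 / (r:ℝ) + (1 - 1 / (r:ℝ)) * auxh c s (r - 1) := by
  rcases Nat.lt_or_ge r 2 with h2 | h2
  · have hr1 : r = 1 := by omega
    have hs0 : s = 0 := by omega
    subst hr1; subst hs0
    unfold auxh
    norm_num [div_self (ne_of_gt hc0)]
  · have hR2 : (2:ℝ) ≤ (r:ℝ) := by exact_mod_cast h2
    have hR0 : ((r:ℝ)) ≠ 0 := by linarith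
    have hR10 : ((r:ℝ) - 1) ≠ 0 := by linarith
    have hcast : ((r - 1 : ℕ):ℝ) = (r:ℝ) - 1 := by
      have h1 : (1:ℕ) ≤ r := by omega
      push_cast [Nat.cast_sub h1]
      ring
    have hkey := aux_calc hc0 hc1 h2 s (by omega)
    unfold auxh
    rw [if_neg (by omega), if_neg (by omega), hcast]
    set X := 1 - c / (r:ℝ) with hX
    set Y := 1 - c / ((r:ℝ) - 1) with hY
    rw [div_le_iff₀ hc0]
    have hexp : (1 / (r:ℝ) + (1 - 1 / (r:ℝ)) * ((1 - Y ^ s) / c)) * c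
        = c / (r:ℝ) + (1 - 1 / (r:ℝ)) * (1 - Y ^ s) := by
      field_simp
    rw [hexp]
    have hfrac : 1 - 1 / (r:ℝ) = ((r:ℝ) - 1) / (r:ℝ) := by field_simp
    rw [hfrac]
    have hdist : ((r:ℝ) - 1) / (r:ℝ) * (1 - Y ^ s)
        = ((r:ℝ) - 1) / (r:ℝ) - ((r:ℝ) - 1) / (r:ℝ) * Y ^ s := by ring
    have hone : (1 - c) / (r:ℝ) + c / (r:ℝ) + ((r:ℝ) - 1) / (r:ℝ) = 1 := by
      field_simp
      ring
    linarith

end AuxLemmas5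
section AuxPartA
set_option linter.unusedSectionVars false

variable {I : Finset α → Prop} {g : Finset α → ℝ} {c : ℝ}
variable {T : ℕ → Finset α} {a : ℕ → α} {n : ℕ}

lemma aux_partA (hI : IsMatroid I) (hg : PolymatroidFn g)
    (hc0 : 0 ≤ c) (hc1 : c ≤ 1)
    (hc : ∀ j : α, (1 - c) * g {j} ≤ g Finset.univ - g (Finset.univ.erase j))
    (hT0 : T 0 = ∅)
    (hins : ∀ i < n, a i ∉ T i ∧ T (i + 1) = insert (a i) (T i))
    (hmax : ∀ i < n, ∀ b ∉ T i, I (insert b (T i)) → g (insert b (T i)) ≤ g (T (i + 1)))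
    (hTI : ∀ i ≤ n, I (T i))
    (hGmax : ∀ b ∉ T n, ¬ I (insert b (T n)))
    {O : Finset α} (hO : I O) :
    g O ≤ (1 + c) * g (T n) := by
  classical
  have hρnn : ∀ i < n, 0 ≤ g (T (i + 1)) - g (T i) := by
    intro i hi
    have := hg.1 ((hins i hi).2 ▸ Finset.subset_insert (a i) (T i))
    linarith
  -- the index function
  have hex : ∀ o, o ∈ O \ T n → ∃ t, ¬ I (insert o (T t)) :=
    fun o ho => ⟨n, hGmax o (Finset.mem_sdiff.1 ho).2⟩
  set idx : α → ℕ := fun o =>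
    if h : ∃ t, ¬ I (insert o (T t)) then Nat.find h else 0 with hidxdef
  have hidx_spec : ∀ o ∈ O \ T n, ¬ I (insert o (T (idx o))) := by
    intro o ho
    rw [hidxdef]; dsimp only
    rw [dif_pos (hex o ho)]
    exact Nat.find_spec (hex o ho)
  have hidx_min : ∀ o ∈ O \ T n, ∀ s < idx o, I (insert o (T s)) := by
    intro o ho s hs
    rw [hidxdef] at hs; dsimp only at hs
    rw [dif_pos (hex o ho)] at hs
    by_contra hcon
    have hle : Nat.find (hex o ho) ≤ s := Nat.find_le hcon
    omega
  have hidx_le : ∀ o ∈ O \ T n, idx o ≤ n := by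
    intro o ho
    rw [hidxdef]; dsimp only
    rw [dif_pos (hex o ho)]
    exact Nat.find_le (hGmax o (Finset.mem_sdiff.1 ho).2)
  have hidx_pos : ∀ o ∈ O \ T n, 1 ≤ idx o := by
    intro o ho
    by_contra hcon
    have h0 : idx o = 0 := by omega
    have := hidx_spec o ho
    rw [h0, hT0, Finset.insert_empty] at this
    exact this (hI.1.2 hO (Finset.singleton_subset_iff.2 (Finset.mem_sdiff.1 ho).1))
  set jdx : α → ℕ := fun o => idx o - 1 with hjdxdef
  have hjdx_lt : ∀ o ∈ O \ T n, jdx o < n := by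
    intro o ho
    have := hidx_le o ho; have := hidx_pos o ho
    rw [hjdxdef]; dsimp only; omega
  have hjdx_feas : ∀ o ∈ O \ T n, I (insert o (T (jdx o))) := by
    intro o ho
    exact hidx_min o ho _ (by have := hidx_pos o ho; rw [hjdxdef]; dsimp only; omega)
  have hjdx_succ : ∀ o ∈ O \ T n, jdx o + 1 = idx o := by
    intro o ho; have := hidx_pos o ho; rw [hjdxdef]; dsimp only; omega
  -- infeasibility is monotone
  have hP : ∀ o ∈ O \ T n, ∀ t, idx o ≤ t → t ≤ n → ¬ I (insert o (T t)) := by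
    intro o ho t hit htn hIt
    exact hidx_spec o ho
      (hI.1.2 hIt (Finset.insert_subset_insert o (aux_T_subset hins hit htn)))
  -- marginal bound
  have hbound : ∀ o ∈ O \ T n,
      g (insert o (T n)) - g (T n) ≤ g (T (jdx o + 1)) - g (T (jdx o)) := by
    intro o ho
    obtain ⟨hoO, hoG⟩ := Finset.mem_sdiff.1 ho
    have hsub : T (jdx o) ⊆ T n := aux_T_subset hins (hjdx_lt o ho).le le_rfl
    have hoT : o ∉ T (jdx o) := fun hmem => hoG (hsub hmem)
    have h1 := hg.2.1 hsub o hoG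
    have h2 := hmax (jdx o) (hjdx_lt o ho) o hoT (hjdx_feas o ho)
    linarith
  -- truncated marginals
  set ρ : ℕ → ℝ := fun i => if i < n then g (T (i + 1)) - g (T i) else 0 with hρdef
  have hρpos : ∀ i < n, ρ i = g (T (i + 1)) - g (T i) := by
    intro i hi; rw [hρdef]; dsimp only; rw [if_pos hi]
  have hρnn' : ∀ i, 0 ≤ ρ i := by
    intro i; rw [hρdef]; dsimp only; split
    · exact hρnn i (by assumption)
    · exact le_rfl
  have hρmono : ∀ i, ρ (i + 1) ≤ ρ i := by
    intro i
    by_cases h1 : i + 1 < n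
    · rw [hρpos _ h1, hρpos _ (by omega)]
      have ⟨ha1, hT1⟩ := hins (i + 1) h1
      have ⟨ha0, hT0'⟩ := hins i (by omega)
      have hnm : a (i + 1) ∉ T (i + 1) := ha1
      have hnm0 : a (i + 1) ∉ T i := fun hmem =>
        hnm (aux_T_subset hins (by omega) (by omega) hmem)
      have hfeas : I (insert (a (i + 1)) (T i)) := by
        apply hI.1.2 (hTI (i + 2) (by omega))
        rw [hT1, hT0']
        exact Finset.insert_subset_insert _ (Finset.subset_insert _ _)
      have hsm := hg.2.1 (aux_T_subset hins (by omega : i ≤ i + 1) (by omega)) (a (i + 1)) hnm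
      have hmx := hmax i (by omega) (a (i + 1)) hnm0 hfeas
      rw [← hT1] at hsm
      linarith
    · rw [hρdef]; dsimp only
      rw [if_neg h1]
      split
      · exact hρnn i (by assumption)
      · exact le_rfl
  -- counting
  have hkey : ∀ t ≤ n, (((O \ T n).filter (fun o => jdx o < t)).card : ℝ)
      + ((O ∩ T t).card : ℝ) ≤ t := by
    intro t htn
    have hdisj : Disjoint (O ∩ T t) ((O \ T n).filter (fun o => jdx o < t)) := by
      rw [Finset.disjoint_left]
      intro x hx1 hx2
      have hxT : x ∈ T n := aux_T_subset hins htn le_rfl (Finset.mem_inter.1 hx1).2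
      exact (Finset.mem_sdiff.1 (Finset.mem_filter.1 hx2).1).2 hxT
    set D := (O ∩ T t) ∪ (O \ T n).filter (fun o => jdx o < t) with hDdef
    have hDsub : D ⊆ O := by
      rw [hDdef]
      apply Finset.union_subset (Finset.inter_subset_left)
      exact (Finset.filter_subset _ _).trans (Finset.sdiff_subset)
    have hDI : I D := hI.1.2 hO hDsub
    have hDcard : D.card ≤ t := by
      by_contra hcon
      push_neg at hcon
      have hTt : (T t).card < D.card := by
        rw [aux_T_card hT0 hins t htn]; omega
      obtain ⟨x, hxD, hxT, hxI⟩ := hI.2 (hTI t htn) hDI hTt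
      rw [hDdef] at hxD
      rcases Finset.mem_union.1 hxD with hx | hx
      · exact hxT (Finset.mem_inter.1 hx).2
      · have hxm := (Finset.mem_filter.1 hx).2
        have hxO := (Finset.mem_filter.1 hx).1
        exact hP x hxO t (by have := hjdx_succ x hxO; omega) htn hxI
    have hcu := Finset.card_union_of_disjoint hdisj
    rw [hDdef, hcu] at hDcard
    have hnat : ((O \ T n).filter (fun o => jdx o < t)).card + (O ∩ T t).card ≤ t := by
      omega
    exact_mod_cast hnat
  -- fiber counts
  set nn : ℕ → ℝ := fun i => (((O \ T n).filter (fun o => jdx o = i)).card : ℝ) with hnndef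
  set mm : ℕ → ℝ := fun i => if a i ∈ O then 0 else 1 with hmmdef
  have hmapsto : ∀ o ∈ O \ T n, jdx o ∈ Finset.range n :=
    fun o ho => Finset.mem_range.2 (hjdx_lt o ho)
  have hsum_nn : ∑ o ∈ O \ T n, ρ (jdx o) = ∑ i ∈ Finset.range n, nn i * ρ i := by
    rw [← Finset.sum_fiberwise_of_maps_to hmapsto (fun o => ρ (jdx o))]
    apply Finset.sum_congr rfl
    intro i _
    have hcg : ∀ o ∈ (O \ T n).filter (fun o => jdx o = i), ρ (jdx o) = ρ i :=
      fun o ho => by rw [(Finset.mem_filter.1 ho).2]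
    rw [Finset.sum_congr rfl hcg, Finset.sum_const, nsmul_eq_mul]
  have hpre_nn : ∀ t ≤ n, ∑ i ∈ Finset.range t, nn i
      = (((O \ T n).filter (fun o => jdx o < t)).card : ℝ) := by
    intro t _
    have hm2 : ∀ o ∈ (O \ T n).filter (fun o => jdx o < t), jdx o ∈ Finset.range t :=
      fun o ho => Finset.mem_range.2 (Finset.mem_filter.1 ho).2
    have hnat : ((O \ T n).filter (fun o => jdx o < t)).card
        = ∑ i ∈ Finset.range t, ((O \ T n).filter (fun o => jdx o = i)).card := by
      rw [Finset.card_eq_sum_card_fiberwise hm2]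
      apply Finset.sum_congr rfl
      intro i hi
      rw [Finset.filter_filter]
      congr 1
      apply Finset.filter_congr
      intro o _
      exact ⟨fun h => h.2, fun h => ⟨h ▸ Finset.mem_range.1 hi, h⟩⟩
    rw [hnat, hnndef]
    push_cast
    rfl
  have hpre_mm : ∀ t ≤ n, ∑ i ∈ Finset.range t, mm i
      = (t : ℝ) - ((O ∩ T t).card : ℝ) := by
    intro t htn
    have h1 : ∀ i ∈ Finset.range t, mm i = 1 - (if a i ∈ O then (1:ℝ) else 0) := by
      intro i _; rw [hmmdef]; dsimp only; split <;> norm_num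
    rw [Finset.sum_congr rfl h1, Finset.sum_sub_distrib, Finset.sum_boole,
      Finset.sum_const, aux_Lcard hT0 hins O t htn]
    simp
  have hpre : ∀ t ≤ n, 0 ≤ ∑ i ∈ Finset.range t, (mm i - nn i) := by
    intro t htn
    rw [Finset.sum_sub_distrib, hpre_mm t htn, hpre_nn t htn]
    have := hkey t htn
    linarith
  have habel := aux_abel ρ (fun i => mm i - nn i) hρmono n hpre
  have habel' : ∑ i ∈ Finset.range n, nn i * ρ i ≤ ∑ i ∈ Finset.range n, mm i * ρ i := by
    have h0 : 0 ≤ (∑ i ∈ Finset.range n, (mm i - nn i)) * ρ n :=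
      mul_nonneg (hpre n le_rfl) (hρnn' n)
    have hsplit : ∑ i ∈ Finset.range n, (mm i - nn i) * ρ i
        = ∑ i ∈ Finset.range n, mm i * ρ i - ∑ i ∈ Finset.range n, nn i * ρ i := by
      rw [← Finset.sum_sub_distrib]
      apply Finset.sum_congr rfl
      intro i _; ring
    rw [hsplit] at habel
    linarith
  have hσeq : ∑ i ∈ Finset.range n, mm i * ρ i
      = ∑ i ∈ (Finset.range n).filter (fun i => a i ∉ O), (g (T (i + 1)) - g (T i)) := by
    rw [Finset.sum_filter]
    apply Finset.sum_congr rfl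
    intro i hi
    have hin := Finset.mem_range.1 hi
    rw [hmmdef]
    dsimp only
    rw [hρpos i hin]
    by_cases h : a i ∈ O
    · simp [h]
    · simp [h]
  have hE1' : ∑ o ∈ O \ T n, (g (insert o (T n)) - g (T n))
      ≤ ∑ i ∈ Finset.range n, nn i * ρ i := by
    rw [← hsum_nn]
    apply Finset.sum_le_sum
    intro o ho
    rw [hρpos _ (hjdx_lt o ho)]
    exact hbound o ho
  have hE1 := aux_expand hg (T n) O
  have hE2 := aux_L2 hg hc1 hc hT0 hins O n le_rfl
  rw [Finset.union_comm] at hE2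
  have htel : ∑ i ∈ Finset.range n, (g (T (i + 1)) - g (T i)) = g (T n) := by
    rw [Finset.sum_range_sub (fun i => g (T i)) n, hT0, hg.2.2, sub_zero]
  have hσle : ∑ i ∈ (Finset.range n).filter (fun i => a i ∉ O), (g (T (i + 1)) - g (T i))
      ≤ g (T n) := by
    rw [← htel]
    apply Finset.sum_le_sum_of_subset_of_nonneg (Finset.filter_subset _ _)
    intro i hi _
    exact hρnn i (Finset.mem_range.1 hi)
  have hfinal := mul_le_mul_of_nonneg_left hσle hc0
  have hexp : (1 + c) * g (T n) = g (T n) + c * g (T n) := by ring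
  rw [hexp]
  rw [hσeq] at habel'
  linarith

end AuxPartA
section AuxPartB
set_option linter.unusedSectionVars false

variable {I : Finset α → Prop} {g : Finset α → ℝ} {c : ℝ}
variable {T : ℕ → Finset α} {a : ℕ → α} {K : ℕ}

lemma aux_partB (huni : ∀ S : Finset α, I S ↔ S.card ≤ K)
    (hg : PolymatroidFn g) (hc0 : 0 < c) (hc1 : c ≤ 1)
    (hc : ∀ j : α, (1 - c) * g {j} ≤ g Finset.univ - g (Finset.univ.erase j))
    (hT0 : T 0 = ∅)
    (hins : ∀ i < K, a i ∉ T i ∧ T (i + 1) = insert (a i) (T i))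
    (hmax : ∀ i < K, ∀ b ∉ T i, I (insert b (T i)) → g (insert b (T i)) ≤ g (T (i + 1)))
    {O' : Finset α} (hO'card : O'.card = K) :
    (1 - (1 - c / (K:ℝ)) ^ K) / c * g O' ≤ g (T K) := by
  classical
  have hcard := aux_T_card hT0 hins
  have MAIN : ∀ s t, t + s = K →
      auxh c s (K - (O' ∩ T t).card) *
        (g O' - (∑ i ∈ (Finset.range t).filter (fun i => a i ∈ O'), (g (T (i + 1)) - g (T i)))
          - c * (∑ i ∈ (Finset.range t).filter (fun i => a i ∉ O'), (g (T (i + 1)) - g (T i))))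
      ≤ g (T K) - g (T t) := by
    intro s
    induction s with
    | zero =>
      intro t ht
      have : t = K := by omega
      subst this
      simp [auxh]
    | succ s ih =>
      intro t ht
      have htK : t < K := by omega
      obtain ⟨ha, hTi⟩ := hins t htK
      have hTsub : g (T t) ≤ g (T K) := hg.1 (aux_T_subset hins htK.le le_rfl)
      have hmK : (O' ∩ T t).card ≤ K := by
        have h1 : (O' ∩ T t).card ≤ O'.card := Finset.card_le_card Finset.inter_subset_left
        rwa [hO'card] at h1
      have hmt : (O' ∩ T t).card ≤ t := by
        have h1 : (O' ∩ T t).card ≤ (T t).card := Finset.card_le_card Finset.inter_subset_right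
        rwa [hcard t htK.le] at h1
      set m := (O' ∩ T t).card with hm
      set u := ∑ i ∈ (Finset.range t).filter (fun i => a i ∈ O'), (g (T (i + 1)) - g (T i)) with hu
      set σ := ∑ i ∈ (Finset.range t).filter (fun i => a i ∉ O'), (g (T (i + 1)) - g (T i)) with hσ
      rcases Nat.eq_zero_or_pos (K - m) with hr0 | hrpos
      · rw [hr0]
        unfold auxh
        rw [if_pos rfl, zero_mul]
        linarith
      · -- the per-step inequality (⋆)
        have hRcast : ((K - m : ℕ) : ℝ) = (K : ℝ) - (m : ℝ) := by
          push_cast [Nat.cast_sub hmK]; ring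
        have hRpos : (0:ℝ) < ((K - m : ℕ) : ℝ) := by exact_mod_cast hrpos
        have hstar : g O' - u - c * σ ≤ ((K - m : ℕ) : ℝ) * (g (T (t + 1)) - g (T t)) := by
          have hE1 := aux_expand hg (T t) O'
          have hterm : ∀ o ∈ O' \ T t,
              g (insert o (T t)) - g (T t) ≤ g (T (t + 1)) - g (T t) := by
            intro o ho
            have hoT : o ∉ T t := (Finset.mem_sdiff.1 ho).2
            have hfeas : I (insert o (T t)) := by
              rw [huni]
              have h1 := Finset.card_insert_le o (T t)
              have h2 := hcard t htK.le
              omega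
            have := hmax t htK o hoT hfeas
            linarith
          have hsum1 := Finset.sum_le_card_nsmul _ _ _ hterm
          rw [nsmul_eq_mul] at hsum1
          have hcsd : (O' \ T t).card = K - m := by
            have := Finset.card_sdiff_add_card_inter O' (T t)
            omega
          rw [hcsd] at hsum1
          have hE2 := aux_L2 hg hc1 hc hT0 hins O' t htK.le
          rw [Finset.union_comm] at hE2
          have htel : ∑ i ∈ Finset.range t, (g (T (i + 1)) - g (T i)) = g (T t) := by
            rw [Finset.sum_range_sub (fun i => g (T i)) t, hT0, hg.2.2, sub_zero]
          have hsplit : u + σ = g (T t) := by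
            rw [hu, hσ, ← htel]
            exact Finset.sum_filter_add_sum_filter_not _ _ _
          linarith
        by_cases he : g O' - u - c * σ ≤ 0
        · have h1 : 0 ≤ auxh c (s + 1) (K - m) := auxh_nonneg hc0 hc1 _ _
          have h2 : auxh c (s + 1) (K - m) * (g O' - u - c * σ) ≤ 0 :=
            mul_nonpos_of_nonneg_of_nonpos h1 he
          have hgoal : g O' - u - c * σ = g O' - u - c * σ := rfl
          linarith
        · push_neg at he
          by_cases haO : a t ∈ O'
          · -- the chosen element is in O'
            have hint : O' ∩ T (t + 1) = insert (a t) (O' ∩ T t) := by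
              rw [hTi]; exact Finset.inter_insert_of_mem haO
            have hm' : (O' ∩ T (t + 1)).card = m + 1 := by
              rw [hint, Finset.card_insert_of_notMem
                (fun hmem => ha (Finset.mem_inter.1 hmem).2)]
            have hu' : ∑ i ∈ (Finset.range (t + 1)).filter (fun i => a i ∈ O'),
                (g (T (i + 1)) - g (T i)) = (g (T (t + 1)) - g (T t)) + u := by
              rw [Finset.range_add_one, Finset.filter_insert, if_pos haO,
                Finset.sum_insert (by simp)]
            have hσ' : ∑ i ∈ (Finset.range (t + 1)).filter (fun i => a i ∉ O'),
                (g (T (i + 1)) - g (T i)) = σ := by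
              rw [Finset.range_add_one, Finset.filter_insert, if_neg (by simp [haO])]
            have IH := ih (t + 1) (by omega)
            rw [hm', hu', hσ'] at IH
            have hmm1 : K - (m + 1) = K - m - 1 := by omega
            rw [hmm1] at IH
            have hsle : s ≤ K - m - 1 := by omega
            have hh2 : auxh c s (K - m - 1) ≤ 1 := auxh_le_one hc0 hc1 hsle
            have hh1 : 0 ≤ auxh c s (K - m - 1) := auxh_nonneg hc0 hc1 _ _
            have hineq1 := aux_INEQ1 hc0 hc1 hrpos (show s + 1 ≤ K - m by omega)
            have hρ : g O' - u - c * σ ≤ ((K - m : ℕ) : ℝ) * (g (T (t + 1)) - g (T t)) := hstar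
            have hA : auxh c (s + 1) (K - m) * (g O' - u - c * σ)
                ≤ (1 / ((K - m : ℕ):ℝ) + (1 - 1 / ((K - m : ℕ):ℝ)) * auxh c s (K - m - 1))
                  * (g O' - u - c * σ) :=
              mul_le_mul_of_nonneg_right hineq1 he.le
            have hdivle : (g O' - u - c * σ) / ((K - m : ℕ):ℝ) ≤ g (T (t + 1)) - g (T t) :=
              (div_le_iff₀ hRpos).2 (by linarith)
            have hiden : (1 / ((K - m : ℕ):ℝ) + (1 - 1 / ((K - m : ℕ):ℝ)) * auxh c s (K - m - 1))
                  * (g O' - u - c * σ)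
                = auxh c s (K - m - 1) * (g O' - u - c * σ)
                  + (1 - auxh c s (K - m - 1)) * ((g O' - u - c * σ) / ((K - m : ℕ):ℝ)) := by
              field_simp
              ring
            have hB : (1 - auxh c s (K - m - 1)) * ((g O' - u - c * σ) / ((K - m : ℕ):ℝ))
                ≤ (1 - auxh c s (K - m - 1)) * (g (T (t + 1)) - g (T t)) :=
              mul_le_mul_of_nonneg_left hdivle (by linarith)
            have hIHexp : auxh c s (K - m - 1) * (g O' - ((g (T (t + 1)) - g (T t)) + u) - c * σ)
                = auxh c s (K - m - 1) * (g O' - u - c * σ)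
                  - auxh c s (K - m - 1) * (g (T (t + 1)) - g (T t)) := by ring
            rw [hIHexp] at IH
            linarith
          · -- the chosen element is not in O'
            have hint : O' ∩ T (t + 1) = O' ∩ T t := by
              rw [hTi]; exact Finset.inter_insert_of_notMem haO
            have hm' : (O' ∩ T (t + 1)).card = m := by rw [hint]
            have hu' : ∑ i ∈ (Finset.range (t + 1)).filter (fun i => a i ∈ O'),
                (g (T (i + 1)) - g (T i)) = u := by
              rw [Finset.range_add_one, Finset.filter_insert, if_neg haO]
            have hσ' : ∑ i ∈ (Finset.range (t + 1)).filter (fun i => a i ∉ O'),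
                (g (T (i + 1)) - g (T i)) = (g (T (t + 1)) - g (T t)) + σ := by
              rw [Finset.range_add_one, Finset.filter_insert, if_pos (by simp [haO]),
                Finset.sum_insert (by simp)]
            have IH := ih (t + 1) (by omega)
            rw [hm', hu', hσ'] at IH
            have hch : c * auxh c s (K - m) ≤ 1 := auxh_le_inv hc0 hc1 _ _
            have hh1 : 0 ≤ auxh c s (K - m) := auxh_nonneg hc0 hc1 _ _
            have hineq2 := aux_INEQ2 (s := s) hc0 hrpos
            have hA : auxh c (s + 1) (K - m) * (g O' - u - c * σ)
                = (1 / ((K - m : ℕ):ℝ) + (1 - c / ((K - m : ℕ):ℝ)) * auxh c s (K - m))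
                  * (g O' - u - c * σ) := by rw [hineq2]
            have hdivle : (g O' - u - c * σ) / ((K - m : ℕ):ℝ) ≤ g (T (t + 1)) - g (T t) :=
              (div_le_iff₀ hRpos).2 (by linarith)
            have hiden : (1 / ((K - m : ℕ):ℝ) + (1 - c / ((K - m : ℕ):ℝ)) * auxh c s (K - m))
                  * (g O' - u - c * σ)
                = auxh c s (K - m) * (g O' - u - c * σ)
                  + (1 - c * auxh c s (K - m)) * ((g O' - u - c * σ) / ((K - m : ℕ):ℝ)) := by
              field_simp
              ring
            have hB : (1 - c * auxh c s (K - m)) * ((g O' - u - c * σ) / ((K - m : ℕ):ℝ))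
                ≤ (1 - c * auxh c s (K - m)) * (g (T (t + 1)) - g (T t)) :=
              mul_le_mul_of_nonneg_left hdivle (by linarith)
            have hIHexp : auxh c s (K - m) * (g O' - u - c * ((g (T (t + 1)) - g (T t)) + σ))
                = auxh c s (K - m) * (g O' - u - c * σ)
                  - c * auxh c s (K - m) * (g (T (t + 1)) - g (T t)) := by ring
            rw [hIHexp] at IH
            linarith
  -- conclude
  have h0 := MAIN K 0 (by omega)
  rw [hT0] at h0
  simp only [Finset.empty_inter, Finset.inter_empty, Finset.card_empty, Nat.sub_zero,
    Finset.range_zero, Finset.filter_empty, Finset.sum_empty, mul_zero, sub_zero,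
    hg.2.2] at h0
  rcases Nat.eq_zero_or_pos K with hK0 | hKpos
  · subst hK0
    simp only [Nat.cast_zero, div_zero, pow_zero, sub_self, zero_div, zero_mul]
    rw [hT0, hg.2.2]
  · have : auxh c K K = (1 - (1 - c / (K:ℝ)) ^ K) / c := by
      unfold auxh
      rw [if_neg (by omega)]
    rw [this] at h0
    linarith
end AuxPartB
/-- Greedy bounds in terms of `d = inf{c(g) : g ∈ 𝓔_f}` for a polymatroid
function `f` defined on a matroid of rank `K` that admits a polymatroid
extension to the whole power set. -/
theorem greedy_bound_extension_curvature {α : Type*} [DecidableEq α] [Fintype α]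
    (I : Finset α → Prop) (hI : IsMatroid I) (K : ℕ)
    (hrank : ∀ B : Finset α, I B → (∀ a ∉ B, ¬ I (insert a B)) → B.card = K)
    (f : Finset α → ℝ) (hf : PolymatroidOn I f)
    (hne : ∃ g : Finset α → ℝ, PolymatroidFn g ∧ ∀ S, I S → g S = f S)
    (d : ℝ)
    (hd : d = sInf {x : ℝ | ∃ g : Finset α → ℝ, PolymatroidFn g ∧
      (∀ S, I S → g S = f S) ∧ x = totalCurvature g})
    (G O : Finset α) (hG : IsGreedy I f G) (hO : IsOptimal I f O) :
    (1 + d) * f G ≥ f O ∧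
      ((∀ S : Finset α, I S ↔ S.card ≤ K) → 0 < d →
        f G ≥ (1 / d) * (1 - (1 - d / (K : ℝ)) ^ K) * f O) := by
  classical
  obtain ⟨g₀, hg₀, hfg₀⟩ := hne
  -- degenerate case: empty type
  cases isEmpty_or_nonempty α with
  | inl hemp =>
    have hGe : G = ∅ := Finset.eq_empty_of_isEmpty G
    have hOe : O = ∅ := Finset.eq_empty_of_isEmpty O
    constructor
    · rw [hGe, hOe, hf.1, mul_zero]
    · intro _ _
      rw [hGe, hOe, hf.1, mul_zero]
  | inr hne' =>
  obtain ⟨n, T, a, hT0, hTn, hstep⟩ := aux_chain hG.1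
  have hins : ∀ i < n, a i ∉ T i ∧ T (i + 1) = insert (a i) (T i) :=
    fun i hi => ⟨(hstep i hi).1, (hstep i hi).2.1⟩
  have hTI : ∀ i ≤ n, I (T i) := by
    intro i
    induction i with
    | zero =>
      intro _
      rw [hT0]
      obtain ⟨⟨S₀, hS₀⟩, her⟩ := hI.1
      exact her hS₀ (Finset.empty_subset _)
    | succ i ih =>
      intro hi
      have h := hstep i (by omega)
      rw [h.2.1]
      exact h.2.2.1
  have hGI : I G := hTn ▸ hTI n le_rfl
  have hGmax : ∀ b ∉ T n, ¬ I (insert b (T n)) := by rw [hTn]; exact hG.2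
  have hnK : n = K := by
    have h1 := hrank G hGI hG.2
    have h2 := aux_T_card hT0 hins n le_rfl
    rw [hTn] at h2
    omega
  subst hnK
  -- greedy maximality for any agreeing extension
  have hmaxg : ∀ (g : Finset α → ℝ), (∀ S, I S → g S = f S) →
      ∀ i < n, ∀ b ∉ T i, I (insert b (T i)) → g (insert b (T i)) ≤ g (T (i + 1)) := by
    intro g hfg i hi b hb hbI
    have h := hstep i hi
    rw [hfg _ hbI, h.2.1, hfg _ h.2.2.1]
    exact h.2.2.2 b hb hbI
  -- part A for each extension
  have hOle : ∀ (g : Finset α → ℝ), PolymatroidFn g → (∀ S, I S → g S = f S) →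
      f O ≤ (1 + totalCurvature g) * f G := by
    intro g hg hfg
    have hc0 := aux_curv_nonneg hg
    have hc1 := aux_curv_le_one hg
    have hpt := fun j => aux_curv_pointwise hg le_rfl j
    have h := aux_partA hI hg hc0 hc1 hpt hT0 hins (hmaxg g hfg) hTI hGmax hO.1
    rw [hTn, hfg G hGI, hfg O hO.1] at h
    exact h
  set S : Set ℝ := {x : ℝ | ∃ g : Finset α → ℝ, PolymatroidFn g ∧
      (∀ S, I S → g S = f S) ∧ x = totalCurvature g} with hSdef
  have hSne : S.Nonempty := ⟨totalCurvature g₀, g₀, hg₀, hfg₀, rfl⟩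
  have hSlb : ∀ x ∈ S, (0:ℝ) ≤ x := by
    rintro x ⟨g, hg, _, rfl⟩
    exact aux_curv_nonneg hg
  have hbdd : BddBelow S := ⟨0, hSlb⟩
  have hd0 : 0 ≤ d := hd ▸ le_csInf hSne hSlb
  have hd1 : d ≤ 1 := by
    rw [hd]
    exact (csInf_le hbdd ⟨g₀, hg₀, hfg₀, rfl⟩).trans (aux_curv_le_one hg₀)
  have hfG0 : 0 ≤ f G := by
    rw [← hfg₀ G hGI]
    exact aux_nonneg hg₀ G
  have hfO0 : 0 ≤ f O := by
    rw [← hfg₀ O hO.1]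
    exact aux_nonneg hg₀ O
  constructor
  · -- first bound
    rcases eq_or_lt_of_le hfG0 with hG0 | hGpos
    · have h := hOle g₀ hg₀ hfg₀
      rw [← hG0, mul_zero] at h
      rw [ge_iff_le, ← hG0, mul_zero]
      exact h
    · have hkey : ∀ x ∈ S, (f O - f G) / f G ≤ x := by
        rintro x ⟨g, hg, hfg, rfl⟩
        have h := hOle g hg hfg
        rw [div_le_iff₀ hGpos]
        nlinarith
      have h1 : (f O - f G) / f G ≤ d := hd ▸ le_csInf hSne hkey
      have h2 := (div_le_iff₀ hGpos).1 h1
      rw [ge_iff_le]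
      nlinarith
  · intro huni hdpos
    -- extend O to a set of size n
    have hOK : O.card ≤ n := (huni O).1 hO.1
    have hKuniv : n ≤ (Finset.univ : Finset α).card := by
      rw [← hrank G hGI hG.2]
      exact Finset.card_le_card (Finset.subset_univ G)
    obtain ⟨O', hOO', _, hO'card⟩ :=
      Finset.exists_subsuperset_card_eq (Finset.subset_univ O) hOK hKuniv
    -- the bound for each ε > 0
    have hεbound : ∀ ε > (0:ℝ),
        (1 - (1 - min (d + ε) 1 / (n:ℝ)) ^ n) / min (d + ε) 1 * f O ≤ f G := by
      intro ε hε
      have hlt : sInf S < d + ε := by rw [← hd]; linarith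
      obtain ⟨x, hxS, hxlt⟩ := (csInf_lt_iff hbdd hSne).1 hlt
      obtain ⟨g, hg, hfg, rfl⟩ := hxS
      set c := min (d + ε) 1 with hc
      have hcpos : 0 < c := lt_min (by linarith) one_pos
      have hc1 : c ≤ 1 := min_le_right _ _
      have hgc : totalCurvature g ≤ c := le_min hxlt.le (aux_curv_le_one hg)
      have hpt := fun j => aux_curv_pointwise hg hgc j
      have hB := aux_partB huni hg hcpos hc1 hpt hT0 hins (hmaxg g hfg) hO'card
      have hgO' : g O ≤ g O' := hg.1 hOO'
      have hcoef : 0 ≤ (1 - (1 - c / (n:ℝ)) ^ n) / c := by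
        rcases Nat.eq_zero_or_pos n with hK0 | hKpos
        · subst hK0
          norm_num
        · have hb := aux_base_mem hcpos hc1 hKpos
          have := pow_le_one₀ hb.1 hb.2 (n := n)
          apply div_nonneg (by linarith) hcpos.le
      have h1 : (1 - (1 - c / (n:ℝ)) ^ n) / c * f O ≤ (1 - (1 - c / (n:ℝ)) ^ n) / c * g O' := by
        apply mul_le_mul_of_nonneg_left _ hcoef
        rw [← hfg O hO.1]
        exact hgO'
      have h2 : g (T n) = f G := by rw [hTn]; exact hfg G hGI
      rw [h2] at hB
      linarith
    -- take the limit ε → 0⁺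
    have hmin0 : min (d + 0) 1 = d := by rw [add_zero]; exact min_eq_left hd1
    have hcont : ContinuousAt (fun x : ℝ => (1 - (1 - x / (n:ℝ)) ^ n) / x * f O) d := by
      apply ContinuousAt.mul _ continuousAt_const
      apply ContinuousAt.div _ continuousAt_id (ne_of_gt hdpos)
      fun_prop
    have hcont2 : ContinuousAt (fun ε : ℝ => min (d + ε) 1) 0 :=
      ((continuous_const.add continuous_id).min continuous_const).continuousAt
    have hcomp : ContinuousAt
        (fun ε : ℝ => (1 - (1 - min (d + ε) 1 / (n:ℝ)) ^ n) / min (d + ε) 1 * f O) 0 := by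
      have h1 : ContinuousAt (fun x : ℝ => (1 - (1 - x / (n:ℝ)) ^ n) / x * f O)
          (min (d + 0) 1) := by rw [hmin0]; exact hcont
      exact ContinuousAt.comp (x := (0:ℝ))
        (g := fun x : ℝ => (1 - (1 - x / (n:ℝ)) ^ n) / x * f O)
        (f := fun ε : ℝ => min (d + ε) 1) h1 hcont2
    have htend : Filter.Tendsto
        (fun ε : ℝ => (1 - (1 - min (d + ε) 1 / (n:ℝ)) ^ n) / min (d + ε) 1 * f O)
        (nhdsWithin 0 (Set.Ioi 0)) (nhds ((1 - (1 - d / (n:ℝ)) ^ n) / d * f O)) := by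
      have h1 := hcomp.tendsto
      simp only [add_zero, min_eq_left hd1] at h1
      exact h1.mono_left nhdsWithin_le_nhds
    have hev : ∀ᶠ ε in nhdsWithin 0 (Set.Ioi 0),
        (1 - (1 - min (d + ε) 1 / (n:ℝ)) ^ n) / min (d + ε) 1 * f O ≤ f G := by
      filter_upwards [self_mem_nhdsWithin] with ε hε
      exact hεbound ε hε
    have hfin : (1 - (1 - d / (n:ℝ)) ^ n) / d * f O ≤ f G := le_of_tendsto htend hev
    have heq : 1 / d * (1 - (1 - d / (n:ℝ)) ^ n) * f O
        = (1 - (1 - d / (n:ℝ)) ^ n) / d * f O := by ring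
    rw [ge_iff_le, heq]
    exact hfin
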